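/- Let A ⊆ {1,…,m} with |A| ≥ ηm, and suppose S satisfies the BRIP condition with parameters (η, ε) where ε < 1/7. Let w_{t+1} = argmin_w { ⟨∇p̃^{A}(w_t), w − w_t⟩ + λh(w) + (1/(2α))‖w − w_t‖² } be one encoded proximal gradient step from any point w_t, with step size 0 < α < 1/M. Then f(w_{t+1}) ≤ ((1+7ε)/(1−3ε)) · f(w_t). -/

import Mathlib

open Matrix Finset

noncomputable section

namespace Stmt5

/-- `p(w) = (1/2)‖Xw − y‖²`. -/
def pObj {n p : ℕ} (X : Matrix (Fin n) (Fin p) ℝ) (y : Fin n → ℝ)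
    (w : Fin p → ℝ) : ℝ :=
  (1 / 2) * ((X *ᵥ w - y) ⬝ᵥ (X *ᵥ w - y))

/-- The original objective `f(w) = p(w) + λ h(w)`. -/
def objF {n p : ℕ} (X : Matrix (Fin n) (Fin p) ℝ) (y : Fin n → ℝ) (lam : ℝ)
    (h : (Fin p → ℝ) → ℝ) (w : Fin p → ℝ) : ℝ :=
  pObj X y w + lam * h w

/-- `‖S_A z‖² = ∑_{i ∈ A} ‖S_i z‖²`, the quadratic form of `S_Aᵀ S_A`. -/
def encSq {n r m : ℕ} (S : Fin m → Matrix (Fin r) (Fin n) ℝ) (A : Finset (Fin m))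
    (z : Fin n → ℝ) : ℝ :=
  ∑ i ∈ A, (S i *ᵥ z) ⬝ᵥ (S i *ᵥ z)

/-- Gradient of `p̃^A(w) = (1/2)‖S_A(Xw − y)‖²`, namely `Xᵀ S_Aᵀ S_A (Xw − y)`. -/
def gradPTilde {n p r m : ℕ} (X : Matrix (Fin n) (Fin p) ℝ) (y : Fin n → ℝ)
    (S : Fin m → Matrix (Fin r) (Fin n) ℝ) (A : Finset (Fin m)) (w : Fin p → ℝ) :
    Fin p → ℝ :=
  Xᵀ *ᵥ (∑ i ∈ A, (S i)ᵀ *ᵥ (S i *ᵥ (X *ᵥ w - y)))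

/-- The proximal subproblem objective
`⟨∇p̃^A(wₜ), v − wₜ⟩ + λ h(v) + (1/(2α))‖v − wₜ‖²`. -/
def proxObj {n p r m : ℕ} (X : Matrix (Fin n) (Fin p) ℝ) (y : Fin n → ℝ)
    (S : Fin m → Matrix (Fin r) (Fin n) ℝ) (lam α : ℝ) (h : (Fin p → ℝ) → ℝ)
    (A : Finset (Fin m)) (wt v : Fin p → ℝ) : ℝ :=
  gradPTilde X y S A wt ⬝ᵥ (v - wt) + lam * h v +
    (1 / (2 * α)) * ((v - wt) ⬝ᵥ (v - wt))

lemma sum_dotProduct' {n : ℕ} {ι : Type*} (A : Finset ι) (f : ι → (Fin n → ℝ))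
    (v : Fin n → ℝ) : (∑ i ∈ A, f i) ⬝ᵥ v = ∑ i ∈ A, f i ⬝ᵥ v := by
  simp only [dotProduct, Finset.sum_apply, Finset.sum_mul]
  exact Finset.sum_comm

lemma dotProduct_self_nonneg' {n : ℕ} (v : Fin n → ℝ) : 0 ≤ v ⬝ᵥ v :=
  Finset.sum_nonneg fun i _ => mul_self_nonneg _

lemma dot_add_self {k : ℕ} (z z' : Fin k → ℝ) :
    (z + z') ⬝ᵥ (z + z') = z ⬝ᵥ z + 2 * (z ⬝ᵥ z') + z' ⬝ᵥ z' := by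
  simp only [dotProduct_add, add_dotProduct, dotProduct_comm z' z]
  ring

lemma coef_mono {ε : ℝ} (hε0 : 0 < ε) (hε : ε < 1 / 7) :
    (1 + 3 * ε) / (1 - 2 * ε) ≤ (1 + 7 * ε) / (1 - 3 * ε) := by
  have h12 : 0 < 1 - 2 * ε := by linarith
  have h13 : 0 < 1 - 3 * ε := by linarith
  rw [div_le_div_iff₀ h12 h13]
  nlinarith [mul_pos hε0 (show (0:ℝ) < 1 - ε by linarith)]

lemma dot_sub_self {k : ℕ} (z z' : Fin k → ℝ) :
    (z - z') ⬝ᵥ (z - z') = z ⬝ᵥ z - 2 * (z ⬝ᵥ z') + z' ⬝ᵥ z' := by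
  simp only [dotProduct_sub, sub_dotProduct, dotProduct_comm z' z]
  ring

set_option maxHeartbeats 1000000 in
/-- Theorem 3(2): one encoded proximal gradient step cannot
increase the objective by more than a factor `(1+7ε)/(1−3ε)`. -/
theorem encoded_proximal_gradient_one_step
    {n p r m : ℕ}
    (X : Matrix (Fin n) (Fin p) ℝ) (y : Fin n → ℝ)
    (S : Fin m → Matrix (Fin r) (Fin n) ℝ)
    (η ε lam M α : ℝ)
    (h : (Fin p → ℝ) → ℝ)
    (A : Finset (Fin m)) (wt wnext : Fin p → ℝ)
    -- BRIP parameters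
    (hη0 : 0 < η) (hη1 : η ≤ 1) (hε0 : 0 < ε) (hε : ε < 1 / 7)
    -- BRIP condition
    (hBRIP : ∀ B : Finset (Fin m), η * m ≤ (B.card : ℝ) →
      ∀ z : Fin n → ℝ,
        (1 - ε) * (z ⬝ᵥ z) ≤ encSq S B z ∧ encSq S B z ≤ (1 + ε) * (z ⬝ᵥ z))
    (hA : η * m ≤ ((A.card : ℕ) : ℝ))
    -- M is (an upper bound for) the largest eigenvalue of XᵀX
    (hM : ∀ v : Fin p → ℝ, (X *ᵥ v) ⬝ᵥ (X *ᵥ v) ≤ M * (v ⬝ᵥ v))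
    -- h is convex and nonnegative (possibly non-smooth), λ ≥ 0
    (hlam : 0 ≤ lam) (hh : ∀ v, 0 ≤ h v)
    (hconv : ConvexOn ℝ Set.univ h)
    -- step size 0 < α < 1/M
    (hα0 : 0 < α) (hα : α < 1 / M)
    -- w_{t+1} minimizes the proximal subproblem at w_t
    (hstep : ∀ v : Fin p → ℝ,
      proxObj X y S lam α h A wt wnext ≤ proxObj X y S lam α h A wt v) :
    objF X y lam h wnext ≤ ((1 + 7 * ε) / (1 - 3 * ε)) * objF X y lam h wt := by
  classical
  -- abbreviations
  set e : Fin n → ℝ := X *ᵥ wt - y with he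
  set Δ : Fin p → ℝ := wnext - wt with hΔ
  set b : Fin n → ℝ := X *ᵥ Δ with hb
  have hbe : X *ᵥ wnext - y = e + b := by
    rw [hb, hΔ, Matrix.mulVec_sub, he]; abel
  set a : ℝ := e ⬝ᵥ e with ha
  set B : ℝ := b ⬝ᵥ b with hB
  set dd : ℝ := Δ ⬝ᵥ Δ with hdd
  set eb : ℝ := e ⬝ᵥ b with heb
  set Qee : ℝ := ∑ i ∈ A, (S i *ᵥ e) ⬝ᵥ (S i *ᵥ e) with hQee
  set Qbb : ℝ := ∑ i ∈ A, (S i *ᵥ b) ⬝ᵥ (S i *ᵥ b) with hQbb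
  set Qeb : ℝ := ∑ i ∈ A, (S i *ᵥ e) ⬝ᵥ (S i *ᵥ b) with hQeb
  have ha0 : 0 ≤ a := dotProduct_self_nonneg' e
  have hB0 : 0 ≤ B := dotProduct_self_nonneg' b
  have hdd0 : 0 ≤ dd := dotProduct_self_nonneg' Δ
  have hlht : 0 ≤ lam * h wt := mul_nonneg hlam (hh wt)
  have hlhn : 0 ≤ lam * h wnext := mul_nonneg hlam (hh wnext)
  -- expansions of quadratic forms
  -- BRIP for A
  have hBA := hBRIP A hA
  -- polarization identities for the encoded quadratic form
  have hQadd : encSq S A (e + b) = Qee + 2 * Qeb + Qbb := by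
    simp only [encSq, Matrix.mulVec_add]
    have key : ∑ i ∈ A, (S i *ᵥ e + S i *ᵥ b) ⬝ᵥ (S i *ᵥ e + S i *ᵥ b)
        = ∑ i ∈ A, ((S i *ᵥ e) ⬝ᵥ (S i *ᵥ e) + 2 * ((S i *ᵥ e) ⬝ᵥ (S i *ᵥ b))
            + (S i *ᵥ b) ⬝ᵥ (S i *ᵥ b)) :=
      Finset.sum_congr rfl fun i _ => dot_add_self _ _
    rw [key, Finset.sum_add_distrib, Finset.sum_add_distrib, ← Finset.mul_sum,
      ← hQee, ← hQeb, ← hQbb]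
  have hQsub : encSq S A (e - b) = Qee - 2 * Qeb + Qbb := by
    simp only [encSq, Matrix.mulVec_sub]
    have key : ∑ i ∈ A, (S i *ᵥ e - S i *ᵥ b) ⬝ᵥ (S i *ᵥ e - S i *ᵥ b)
        = ∑ i ∈ A, ((S i *ᵥ e) ⬝ᵥ (S i *ᵥ e) - 2 * ((S i *ᵥ e) ⬝ᵥ (S i *ᵥ b))
            + (S i *ᵥ b) ⬝ᵥ (S i *ᵥ b)) :=
      Finset.sum_congr rfl fun i _ => dot_sub_self _ _
    rw [key, Finset.sum_add_distrib, Finset.sum_sub_distrib, ← Finset.mul_sum,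
      ← hQee, ← hQeb, ← hQbb]
  have hpol : eb - Qeb ≤ (ε / 2) * (a + B) := by
    have h1 := (hBA (e + b)).1
    have h2 := (hBA (e - b)).2
    rw [hQadd, dot_add_self e b] at h1
    rw [hQsub, dot_sub_self e b] at h2
    rw [← ha, ← hB, ← heb] at h1 h2
    nlinarith [h1, h2]
  -- gradient dot product identity
  have hgrad : gradPTilde X y S A wt ⬝ᵥ Δ = Qeb := by
    rw [gradPTilde, Matrix.mulVec_transpose, ← Matrix.dotProduct_mulVec, ← he, ← hb,
      sum_dotProduct']
    refine Finset.sum_congr rfl fun i _ => ?_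
    rw [Matrix.mulVec_transpose, ← Matrix.dotProduct_mulVec]
  -- the proximal step inequality at v = wt
  have hprox : Qeb + lam * h wnext + (1 / (2 * α)) * dd ≤ lam * h wt := by
    have := hstep wt
    simp only [proxObj, sub_self, dotProduct_zero, zero_dotProduct,
      mul_zero, add_zero, zero_add] at this
    rw [← hΔ, hgrad, ← hdd] at this
    linarith [this]
  -- step size control : 0 < M, α * M < 1
  have hM0 : 0 < M := by
    by_contra hc
    push_neg at hc
    have : 1 / M ≤ 0 := one_div_nonpos.mpr hc
    linarith
  have hαM : α * M < 1 := (lt_div_iff₀ hM0).mp hα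
  have hMb : B ≤ M * dd := by
    have := hM Δ; rw [← hb, ← hB, ← hdd] at this; exact this
  have h5 : α * B ≤ dd := by nlinarith
  have hhalf : (1 / 2) * B ≤ (1 / (2 * α)) * dd := by
    have h1 : (1 / (2 * α)) * (α * B) ≤ (1 / (2 * α)) * dd :=
      mul_le_mul_of_nonneg_left h5 (by positivity)
    have h2 : (1 / (2 * α)) * (α * B) = (1 / 2) * B := by
      field_simp
    linarith
  -- objective values
  have hFdef : objF X y lam h wnext = (1 / 2) * (a + 2 * eb + B) + lam * h wnext := by
    rw [objF, pObj, hbe, dot_add_self e b, ← ha, ← hB, ← heb]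
  have hfdef : objF X y lam h wt = (1 / 2) * a + lam * h wt := by
    rw [objF, pObj, ← he, ← ha]
  set F : ℝ := objF X y lam h wnext with hF
  set f : ℝ := objF X y lam h wt with hf
  have hE0 : 0 ≤ a + 2 * eb + B := by
    have h0 := dotProduct_self_nonneg' (e + b)
    rw [dot_add_self e b, ← ha, ← hB, ← heb] at h0
    exact h0
  have hf0 : 0 ≤ f := by rw [hfdef]; linarith
  have hF0 : 0 ≤ F := by rw [hFdef]; linarith
  -- geometric bound : B ≤ 4F + 2a
  have hBgeom : 0 ≤ 4 * a + 4 * eb + B := by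
    have h0 : 0 ≤ (e + e + b) ⬝ᵥ (e + e + b) := dotProduct_self_nonneg' _
    have h1 : (e + e + b) ⬝ᵥ (e + e + b) = 4 * a + 4 * eb + B := by
      rw [dot_add_self (e + e) b, dot_add_self e e, add_dotProduct, ← ha, ← hB, ← heb]
      ring
    linarith
  have hBle : B ≤ 4 * F + 2 * a := by
    rw [hFdef]; linarith
  have ha2f : a ≤ 2 * f := by rw [hfdef]; linarith
  -- main chain
  have step1 : F ≤ f + eb + (1 / 2) * B - (1 / (2 * α)) * dd - Qeb := by
    rw [hFdef, hfdef]; linarith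
  have step2 : F ≤ f + (ε / 2) * (a + B) := by linarith
  have e1 : (ε / 2) * B ≤ (ε / 2) * (4 * F + 2 * a) :=
    mul_le_mul_of_nonneg_left hBle (by positivity)
  have e2 : (3 * ε / 2) * a ≤ (3 * ε / 2) * (2 * f) :=
    mul_le_mul_of_nonneg_left ha2f (by positivity)
  have h_lin : (1 - 2 * ε) * F ≤ (1 + 3 * ε) * f := by linarith [step2, e1, e2]
  have h12 : 0 < 1 - 2 * ε := by linarith
  have h13 : 0 < 1 - 3 * ε := by linarith
  have hF' : F ≤ ((1 + 3 * ε) / (1 - 2 * ε)) * f := by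
    rw [div_mul_eq_mul_div, le_div_iff₀ h12]; linarith [h_lin]
  have hcoef := coef_mono hε0 hε
  calc F ≤ ((1 + 3 * ε) / (1 - 2 * ε)) * f := hF'
    _ ≤ ((1 + 7 * ε) / (1 - 3 * ε)) * f := mul_le_mul_of_nonneg_right hcoef hf0


end Stmt5
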